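/- Fix reals v > 0 and δ ∈ [0,1], and for a ∈ {0,1} let ψ_a = √δ·(e_a ⊗ e_a) + √(1−δ)·(e_2 ⊗ e_2) ∈ ℂ⁹ (indexed by Fin 3 × Fin 3). Let d ≥ 1 and suppose ρ_init, ρ_0, ρ_1 are positive semidefinite complex matrices indexed by (Fin d × Fin 3 × Fin 3) and ρ_{00}, ρ_{01}, ρ_{10}, ρ_{11} are positive semidefinite complex matrices indexed by (Fin 3 × Fin 3), satisfying: (i) tr(ρ_init) = 1; (ii) for each b ∈ {0,1} and all β, β' ∈ Fin 3, Σ_{x,α} ρ_init((x,α,β),(x,α,β')) = Σ_{x,α} ρ_b((x,α,β),(x,α,β')); (iii) for each b ∈ {0,1} the partial trace over Fin d of ρ_b equals ρ_{b0} + ρ_{b1}. Suppose further λ ∈ ℝ, M_0, M_1 are Hermitian 3×3 matrices and L_0, L_1 are Hermitian 9×9 matrices (indexed by Fin 3 × Fin 3) such that M_0 + M_1 ⪯ λ·I₃, L_b ⪯ I₃ ⊗ M_b for b ∈ {0,1}, and (v + [a=b])·ψ_a ψ_a† ⪯ L_b for all a, b ∈ {0,1}. Then Σ_{a,b ∈ {0,1}}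 (v + [a=b])·Re⟨ψ_a, ρ_{ba} ψ_a⟩ ≤ λ. (Weak duality: any feasible dual solution upper-bounds any feasible primal value of Alice's cheating SDP.) -/

import Mathlib

open Matrix Kronecker
open scoped ComplexOrder

lemma myTraceNonneg {n : Type*} [Fintype n] [DecidableEq n]
    {A : Matrix n n ℂ} (hA : A.PosSemidef) : 0 ≤ A.trace.re := by
  rw [Matrix.trace, Complex.re_sum]
  refine Finset.sum_nonneg fun i _ => ?_
  have := hA.re_dotProduct_nonneg (Pi.single i 1)
  simpa [dotProduct, Matrix.mulVec, Pi.single_apply, Matrix.diag] using this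

lemma myMulTraceNonneg {n : Type*} [Fintype n] [DecidableEq n]
    {A B : Matrix n n ℂ} (hA : A.PosSemidef) (hB : B.PosSemidef) :
    0 ≤ ((A * B).trace).re := by
  open scoped MatrixOrder in obtain ⟨C, rfl⟩ := CStarAlgebra.nonneg_iff_eq_star_mul_self.mp hB.nonneg
  rw [← Matrix.mul_assoc, Matrix.trace_mul_cycle]
  exact myTraceNonneg (hA.mul_mul_conjTranspose_same C)

lemma myTraceMono {n : Type*} [Fintype n] [DecidableEq n]
    {X Y B : Matrix n n ℂ} (h : (Y - X).PosSemidef) (hB : B.PosSemidef) :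
    ((X * B).trace).re ≤ ((Y * B).trace).re := by
  have := myMulTraceNonneg h hB
  rw [Matrix.sub_mul, Matrix.trace_sub, Complex.sub_re] at this
  linarith

lemma myVecTrace {n : Type*} [Fintype n] [DecidableEq n]
    (ψ : n → ℂ) (B : Matrix n n ℂ) :
    ((Matrix.vecMulVec ψ (star ψ)) * B).trace = star ψ ⬝ᵥ B.mulVec ψ := by
  simp only [Matrix.trace, Matrix.diag, Matrix.mul_apply, Matrix.vecMulVec_apply,
    dotProduct, Matrix.mulVec, Pi.star_apply, Finset.mul_sum]
  rw [Finset.sum_comm]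
  exact Finset.sum_congr rfl fun q _ => Finset.sum_congr rfl fun p _ => by ring

lemma rot4 {M : Type*} [AddCommMonoid M] {a b c e : Type*}
    [Fintype a] [Fintype b] [Fintype c] [Fintype e] (f : a → b → c → e → M) :
    ∑ i, ∑ j, ∑ k, ∑ l, f i j k l = ∑ j, ∑ k, ∑ l, ∑ i, f i j k l :=
  calc ∑ i, ∑ j, ∑ k, ∑ l, f i j k l
      = ∑ j, ∑ i, ∑ k, ∑ l, f i j k l := Finset.sum_comm
    _ = ∑ j, ∑ k, ∑ i, ∑ l, f i j k l :=
        Finset.sum_congr rfl fun _ _ => Finset.sum_comm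
    _ = ∑ j, ∑ k, ∑ l, ∑ i, f i j k l :=
        Finset.sum_congr rfl fun _ _ => Finset.sum_congr rfl fun _ _ => Finset.sum_comm

lemma swap4 {M : Type*} [AddCommMonoid M] {a b c e : Type*}
    [Fintype a] [Fintype b] [Fintype c] [Fintype e] (f : a → b → c → e → M) :
    ∑ i, ∑ j, ∑ k, ∑ l, f i j k l = ∑ k, ∑ l, ∑ i, ∑ j, f i j k l :=
  calc ∑ i, ∑ j, ∑ k, ∑ l, f i j k l
      = ∑ i, ∑ k, ∑ j, ∑ l, f i j k l :=
        Finset.sum_congr rfl fun _ _ => Finset.sum_comm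
    _ = ∑ k, ∑ i, ∑ j, ∑ l, f i j k l := Finset.sum_comm
    _ = ∑ k, ∑ i, ∑ l, ∑ j, f i j k l :=
        Finset.sum_congr rfl fun _ _ => Finset.sum_congr rfl fun _ _ => Finset.sum_comm
    _ = ∑ k, ∑ l, ∑ i, ∑ j, f i j k l :=
        Finset.sum_congr rfl fun _ _ => Finset.sum_comm

lemma kronTrace (d : ℕ) (ρ : Matrix (Fin d × Fin 3 × Fin 3) (Fin d × Fin 3 × Fin 3) ℂ)
    (σ0 σ1 : Matrix (Fin 3 × Fin 3) (Fin 3 × Fin 3) ℂ)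
    (τ Mb : Matrix (Fin 3) (Fin 3) ℂ)
    (hτ : ∀ β β', τ β β' = ∑ x : Fin d, ∑ α : Fin 3, ρ (x,α,β) (x,α,β'))
    (hmeas : ∀ α β α' β' : Fin 3,
      ∑ x : Fin d, ρ (x, α, β) (x, α', β') = σ0 (α, β) (α', β') + σ1 (α, β) (α', β')) :
    ((1 ⊗ₖ Mb) * (σ0 + σ1)).trace = (Mb * τ).trace := by
  have hσ : ∀ α β α' β', (σ0 + σ1) (α,β) (α',β') = ∑ x : Fin d, ρ (x,α,β) (x,α',β') :=
    fun α β α' β' => ((hmeas α β α' β').symm)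
  simp only [Matrix.trace, Matrix.diag, Matrix.mul_apply, Fintype.sum_prod_type,
    Matrix.kroneckerMap_apply, Matrix.one_apply, ite_mul, one_mul, zero_mul,
    Finset.sum_ite_irrel, Finset.sum_const_zero, Finset.sum_ite_eq', Finset.mem_univ,
    Finset.sum_ite_eq, if_true, hσ, hτ, Finset.mul_sum]
  exact rot4 _

/-- The protocol state `ψ_a = √δ·e_a⊗e_a + √(1-δ)·e_2⊗e_2 ∈ ℂ³ ⊗ ℂ³` for `a ∈ {0,1}`. -/
noncomputable def psiPen (δ : ℝ) (a : Fin 2) : Fin 3 × Fin 3 → ℂ := fun p =>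
  if p.1 = Fin.castLE (by norm_num) a ∧ p.2 = Fin.castLE (by norm_num) a then
    (Real.sqrt δ : ℂ)
  else if p.1 = 2 ∧ p.2 = 2 then (Real.sqrt (1 - δ) : ℂ) else 0

/-- Weak duality for Alice's cheating SDP in the two-party coin-flipping protocol
with penalty `v`: any feasible dual solution `(λ, M₀, M₁, L₀, L₁)` upper-bounds
the value of any feasible primal (cheating) solution. -/
theorem stmt_6 (v δ : ℝ) (hv : 0 < v) (hδ0 : 0 ≤ δ) (hδ1 : δ ≤ 1)
    (d : ℕ) (hd : 1 ≤ d)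
    (ρI : Matrix (Fin d × Fin 3 × Fin 3) (Fin d × Fin 3 × Fin 3) ℂ)
    (ρ : Fin 2 → Matrix (Fin d × Fin 3 × Fin 3) (Fin d × Fin 3 × Fin 3) ℂ)
    (σ : Fin 2 → Fin 2 → Matrix (Fin 3 × Fin 3) (Fin 3 × Fin 3) ℂ)
    (hρI : ρI.PosSemidef) (hρ : ∀ b, (ρ b).PosSemidef) (hσ : ∀ b a, (σ b a).PosSemidef)
    (htr : ρI.trace = 1)
    (hBfix : ∀ b : Fin 2, ∀ β β' : Fin 3,
      ∑ x : Fin d, ∑ α : Fin 3, ρI (x, α, β) (x, α, β') =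
      ∑ x : Fin d, ∑ α : Fin 3, ρ b (x, α, β) (x, α, β'))
    (hmeas : ∀ b : Fin 2, ∀ α β α' β' : Fin 3,
      ∑ x : Fin d, ρ b (x, α, β) (x, α', β') =
      σ b 0 (α, β) (α', β') + σ b 1 (α, β) (α', β'))
    (lam : ℝ) (M : Fin 2 → Matrix (Fin 3) (Fin 3) ℂ)
    (L : Fin 2 → Matrix (Fin 3 × Fin 3) (Fin 3 × Fin 3) ℂ)
    (hMherm : ∀ b, (M b).IsHermitian) (hLherm : ∀ b, (L b).IsHermitian)
    (hMle : ((lam : ℂ) • (1 : Matrix (Fin 3) (Fin 3) ℂ) - (M 0 + M 1)).PosSemidef)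
    (hLle : ∀ b : Fin 2, ((1 : Matrix (Fin 3) (Fin 3) ℂ) ⊗ₖ M b - L b).PosSemidef)
    (hψle : ∀ a b : Fin 2,
      (L b - ((v + if a = b then 1 else 0 : ℝ) : ℂ) •
        Matrix.vecMulVec (psiPen δ a) (star (psiPen δ a))).PosSemidef) :
    ∑ a : Fin 2, ∑ b : Fin 2,
      (v + if a = b then 1 else 0) *
        (star (psiPen δ a) ⬝ᵥ (σ b a).mulVec (psiPen δ a)).re ≤ lam := by
  set τ : Matrix (Fin 3) (Fin 3) ℂ :=
    Matrix.of (fun β β' => ∑ x : Fin d, ∑ α : Fin 3, ρI (x,α,β) (x,α,β')) with hτ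
  have hτherm : τ.IsHermitian := by
    ext β β'
    simp only [Matrix.conjTranspose_apply, hτ, Matrix.of_apply, star_sum]
    exact Finset.sum_congr rfl fun x _ => Finset.sum_congr rfl fun α _ =>
      congrFun (congrFun hρI.1 _) _
  have hτpsd : τ.PosSemidef := by
    refine .of_dotProduct_mulVec_nonneg hτherm fun w => ?_
    have inner : ∀ (x : Fin d) (α : Fin 3),
        star (fun p : Fin d × Fin 3 × Fin 3 =>
          if p.1 = x ∧ p.2.1 = α then w p.2.2 else 0) ⬝ᵥ
        ρI.mulVec (fun p => if p.1 = x ∧ p.2.1 = α then w p.2.2 else 0) =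
        ∑ β : Fin 3, ∑ β' : Fin 3, star (w β) * (ρI (x,α,β) (x,α,β') * w β') := by
      intro x α
      simp only [dotProduct, Matrix.mulVec, Pi.star_apply,
        Fintype.sum_prod_type, ite_and, apply_ite (star : ℂ → ℂ), star_zero,
        ite_mul, zero_mul, mul_ite, mul_zero, Finset.sum_ite_irrel,
        Finset.sum_const_zero, Finset.sum_ite_eq', Finset.mem_univ, if_true,
        Finset.mul_sum]
    have key : star w ⬝ᵥ τ.mulVec w = ∑ x : Fin d, ∑ α : Fin 3,
        ∑ β : Fin 3, ∑ β' : Fin 3, star (w β) * (ρI (x,α,β) (x,α,β') * w β') := by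
      simp only [dotProduct, Matrix.mulVec, Pi.star_apply, hτ,
        Matrix.of_apply, Finset.mul_sum, Finset.sum_mul]
      exact swap4 _
    rw [key]
    refine Finset.sum_nonneg fun x _ => Finset.sum_nonneg fun α _ => ?_
    rw [← inner x α]
    exact hρI.dotProduct_mulVec_nonneg _
  have hτtr : τ.trace = 1 := by
    rw [← htr]
    simp only [Matrix.trace, Matrix.diag, hτ, Matrix.of_apply, Fintype.sum_prod_type]
    rw [Finset.sum_comm]
    exact Finset.sum_congr rfl fun x _ => Finset.sum_comm
  have hτρ : ∀ (b : Fin 2) (β β' : Fin 3),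
      τ β β' = ∑ x : Fin d, ∑ α : Fin 3, ρ b (x,α,β) (x,α,β') :=
    fun b β β' => hBfix b β β'
  have step1 : ∀ a b : Fin 2,
      (v + if a = b then 1 else 0) *
        (star (psiPen δ a) ⬝ᵥ (σ b a).mulVec (psiPen δ a)).re ≤
      ((L b * σ b a).trace).re := by
    intro a b
    have h := myTraceMono (hψle a b) (hσ b a)
    rw [Matrix.smul_mul, Matrix.trace_smul, myVecTrace] at h
    simpa [smul_eq_mul, Complex.mul_re] using h
  have step2 : ∀ a b : Fin 2,
      ((L b * σ b a).trace).re ≤ (((1 ⊗ₖ M b) * σ b a).trace).re :=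
    fun a b => myTraceMono (hLle b) (hσ b a)
  have step3 : ∀ b : Fin 2,
      ((1 ⊗ₖ M b) * σ b 0).trace + ((1 ⊗ₖ M b) * σ b 1).trace = (M b * τ).trace := by
    intro b
    rw [← Matrix.trace_add, ← Matrix.mul_add]
    exact kronTrace d (ρ b) (σ b 0) (σ b 1) τ (M b) (hτρ b) (hmeas b)
  have step4 : ((M 0 * τ).trace).re + ((M 1 * τ).trace).re ≤ lam := by
    have h := myTraceMono hMle hτpsd
    rw [Matrix.add_mul, Matrix.trace_add, Complex.add_re, Matrix.smul_mul,
      Matrix.one_mul, Matrix.trace_smul, hτtr] at h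
    simpa [smul_eq_mul, Complex.mul_re] using h
  calc ∑ a : Fin 2, ∑ b : Fin 2,
        (v + if a = b then 1 else 0) *
          (star (psiPen δ a) ⬝ᵥ (σ b a).mulVec (psiPen δ a)).re
      ≤ ∑ a : Fin 2, ∑ b : Fin 2, (((1 ⊗ₖ M b) * σ b a).trace).re := by
        refine Finset.sum_le_sum fun a _ => Finset.sum_le_sum fun b _ => ?_
        exact (step1 a b).trans (step2 a b)
    _ = ∑ b : Fin 2, (((M b * τ).trace).re) := by
        rw [Finset.sum_comm]
        refine Finset.sum_congr rfl fun b _ => ?_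
        rw [Fin.sum_univ_two, ← Complex.add_re, step3 b]
    _ ≤ lam := by rw [Fin.sum_univ_two]; exact step4
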